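/- Let {B_{b|i}}_{i=1}^n be qubit POVMs (2×2 positive matrices with continuous or discrete outcomes), and write p_i(b) = ⟨0|B_{b|i}|0⟩, M_i(b) = B_{b|i}/p_i(b), r_i(b) = det M_i(b). If Σ_{i=1}^n r_i(b_i) ≥ n - 1 for all outcome tuples (b_1,...,b_n), then the POVMs {B_{b|i}} are jointly measurable: there exists a joint POVM G_{b_1,...,b_n} whose i-th margin equals B_{b|i} for every i. -/

import Mathlib

open Matrix BigOperators ComplexOrder
noncomputable section

lemma key {n m : ℕ} (Q : Fin n → Fin m → ℂ) (i : Fin n) (b : Fin m) :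
    ∑ g : Fin n → Fin m, (if g i = b then ∏ j, Q j (g j) else 0)
      = Q i b * ∏ j ∈ Finset.univ.erase i, ∑ c, Q j c := by
  classical
  have h1 : ∀ g : Fin n → Fin m,
      (if g i = b then ∏ j, Q j (g j) else 0)
        = ∏ j, (if j = i then (if g j = b then Q j (g j) else 0) else Q j (g j)) := by
    intro g
    by_cases h : g i = b
    · simp only [h, if_true]
      exact (Finset.prod_congr rfl (fun j _ => by by_cases hj : j = i <;> simp [hj, h])).symm
    · simp only [h, if_false]
      exact (Finset.prod_eq_zero (Finset.mem_univ i) (by simp [h])).symm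
  simp only [h1]
  rw [← Fintype.piFinset_univ, ← Finset.prod_univ_sum (fun _ => Finset.univ)
      (fun j c => if j = i then (if c = b then Q j c else 0) else Q j c)]
  rw [← Finset.mul_prod_erase Finset.univ _ (Finset.mem_univ i)]
  congr 1
  · simp
  · exact Finset.prod_congr rfl (fun j hj => by
      simp [Finset.ne_of_mem_erase hj])

lemma key1 {n m : ℕ} (Q : Fin n → Fin m → ℂ) (i : Fin n) (b : Fin m)
    (h : ∀ j, j ≠ i → ∑ c, Q j c = 1) :
    ∑ g : Fin n → Fin m, (if g i = b then ∏ j, Q j (g j) else 0) = Q i b := by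
  rw [key, Finset.prod_eq_one (fun j hj => h j (Finset.ne_of_mem_erase hj)), mul_one]

lemma key0 {n m : ℕ} (Q : Fin n → Fin m → ℂ) (i : Fin n) (b : Fin m) (k : Fin n)
    (hk : k ≠ i) (h : ∑ c, Q k c = 0) :
    ∑ g : Fin n → Fin m, (if g i = b then ∏ j, Q j (g j) else 0) = 0 := by
  rw [key, Finset.prod_eq_zero (Finset.mem_erase.2 ⟨hk, Finset.mem_univ k⟩) h, mul_zero]

lemma S00 {n m : ℕ} (p : Fin n → Fin m → ℂ) (h1 : ∀ j, ∑ c, p j c = 1)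
    (i : Fin n) (b : Fin m) :
    ∑ g : Fin n → Fin m, (if g i = b then ∏ j, p j (g j) else 0) = p i b :=
  key1 p i b (fun j _ => h1 j)

lemma S10 {n m : ℕ} (p q : Fin n → Fin m → ℂ) (h1 : ∀ j, ∑ c, p j c = 1)
    (h0 : ∀ j, ∑ c, p j c * q j c = 0) (i : Fin n) (b : Fin m) :
    ∑ g : Fin n → Fin m, (if g i = b then (∏ j, p j (g j)) * (∑ k, q k (g k)) else 0)
      = p i b * q i b := by
  classical
  have hrw : ∀ g : Fin n → Fin m,
      (if g i = b then (∏ j, p j (g j)) * (∑ k, q k (g k)) else 0)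
        = ∑ k, (if g i = b then ∏ j, (p j (g j) * if j = k then q j (g j) else 1) else 0) := by
    intro g
    split
    · rw [Finset.mul_sum]
      refine Finset.sum_congr rfl fun k _ => ?_
      rw [Finset.prod_mul_distrib, Finset.prod_ite_eq' Finset.univ k (fun j => q j (g j))]
      simp [mul_comm]
    · simp
  simp only [hrw]
  rw [Finset.sum_comm, Finset.sum_eq_single i]
  · have := key1 (fun j c => p j c * if j = i then q j c else 1) i b
      (fun j hj => by simp only [if_neg hj, mul_one]; exact h1 j)
    simpa using this
  · intro k _ hk
    have := key0 (fun j c => p j c * if j = k then q j c else 1) i b k hk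
      (by simpa using h0 k)
    simpa using this
  · simp

lemma S2 {n m : ℕ} (p q r : Fin n → Fin m → ℂ) (_h1 : ∀ j, ∑ c, p j c = 1)
    (hq : ∀ j, ∑ c, p j c * q j c = 0) (hr : ∀ j, ∑ c, p j c * r j c = 0)
    (i : Fin n) (b : Fin m) :
    ∑ g : Fin n → Fin m, (if g i = b then (∏ j, p j (g j)) *
        (∑ k, ∑ l, if l = k then 0 else q k (g k) * r l (g l)) else 0) = 0 := by
  classical
  have hrw : ∀ g : Fin n → Fin m,
      (if g i = b then (∏ j, p j (g j)) *
          (∑ k, ∑ l, if l = k then 0 else q k (g k) * r l (g l)) else 0)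
        = ∑ k, ∑ l, if l = k then 0 else
            (if g i = b then
              ∏ j, (p j (g j) * (if j = k then q j (g j) else 1)
                * (if j = l then r j (g j) else 1)) else 0) := by
    intro g
    split
    · rw [Finset.mul_sum]
      refine Finset.sum_congr rfl fun k _ => ?_
      rw [Finset.mul_sum]
      refine Finset.sum_congr rfl fun l _ => ?_
      by_cases hlk : l = k
      · simp [hlk]
      · simp only [if_neg hlk]
        rw [Finset.prod_mul_distrib, Finset.prod_mul_distrib,
          Finset.prod_ite_eq' Finset.univ k (fun j => q j (g j)),
          Finset.prod_ite_eq' Finset.univ l (fun j => r j (g j))]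
        simp [mul_assoc]
    · simp
  simp only [hrw]
  rw [Finset.sum_comm]
  refine Finset.sum_eq_zero fun k _ => ?_
  rw [Finset.sum_comm]
  refine Finset.sum_eq_zero fun l _ => ?_
  by_cases hlk : l = k
  · simp [hlk]
  · simp only [if_neg hlk]
    by_cases hki : k = i
    · have := key0 (fun j c => p j c * (if j = k then q j c else 1) * (if j = l then r j c else 1))
        i b l (by intro h; exact hlk (h.trans hki.symm))
        (by simpa [if_neg hlk] using hr l)
      simpa using this
    · have := key0 (fun j c => p j c * (if j = k then q j c else 1) * (if j = l then r j c else 1))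
        i b k hki
        (by simpa [if_neg (show ¬k = l from fun h => hlk h.symm)] using hq k)
      simpa using this

/-- The determinant of the normalized 2×2 POVM element M_i(b) = B_{b|i} / ⟨0|B_{b|i}|0⟩. -/
def rdet (B : Matrix (Fin 2) (Fin 2) ℂ) : ℂ := (((B 0 0)⁻¹) • B).det

def pC (A : Matrix (Fin 2) (Fin 2) ℂ) : ℂ := A 0 0
def fC (A : Matrix (Fin 2) (Fin 2) ℂ) : ℂ := A 1 0 / A 0 0
def tC (A : Matrix (Fin 2) (Fin 2) ℂ) : ℂ := fC A * (starRingEnd ℂ) (fC A) + rdet A - 1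

variable {A : Matrix (Fin 2) (Fin 2) ℂ}

lemma entry10 (h0 : A 0 0 ≠ 0) : A 1 0 = pC A * fC A := by
  rw [pC, fC, mul_div_assoc', mul_comm, mul_div_assoc, div_self h0, mul_one]

lemma entry01 (hA : A.IsHermitian) (h0 : A 0 0 ≠ 0) :
    A 0 1 = pC A * (starRingEnd ℂ) (fC A) := by
  have h01 : (starRingEnd ℂ) (A 1 0) = A 0 1 := hA.apply 0 1
  have h00 : (starRingEnd ℂ) (A 0 0) = A 0 0 := hA.apply 0 0
  rw [pC, fC, map_div₀, h01, h00, mul_div_assoc', mul_comm, mul_div_assoc, div_self h0, mul_one]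

lemma entry11 (hA : A.IsHermitian) (h0 : A 0 0 ≠ 0) : A 1 1 = pC A * (tC A + 1) := by
  have h01 : (starRingEnd ℂ) (A 1 0) = A 0 1 := hA.apply 0 1
  have h00 : (starRingEnd ℂ) (A 0 0) = A 0 0 := hA.apply 0 0
  simp only [pC, tC, fC, rdet, Matrix.det_fin_two, Matrix.smul_apply, smul_eq_mul,
    map_div₀, h01, h00]
  field_simp
  ring

lemma rdet_conj (hA : A.IsHermitian) : (starRingEnd ℂ) (rdet A) = rdet A := by
  have h01 : (starRingEnd ℂ) (A 1 0) = A 0 1 := hA.apply 0 1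
  have h10 : (starRingEnd ℂ) (A 0 1) = A 1 0 := hA.apply 1 0
  have h00 : (starRingEnd ℂ) (A 0 0) = A 0 0 := hA.apply 0 0
  have h11 : (starRingEnd ℂ) (A 1 1) = A 1 1 := hA.apply 1 1
  simp only [rdet, Matrix.det_fin_two, Matrix.smul_apply, smul_eq_mul, map_sub, _root_.map_mul,
    map_inv₀, h01, h10, h00, h11]
  ring

lemma psd_aux (P F s : ℂ) (hP : 0 ≤ P) (hs : 0 ≤ s) :
    (P • !![1, (starRingEnd ℂ) F; F, F * (starRingEnd ℂ) F + s]).PosSemidef := by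
  have hP' : (starRingEnd ℂ) P = P := Complex.conj_eq_iff_im.2 ((Complex.le_def.1 hP).2.symm)
  have hs' : (starRingEnd ℂ) s = s := Complex.conj_eq_iff_im.2 ((Complex.le_def.1 hs).2.symm)
  rw [Matrix.posSemidef_iff_dotProduct_mulVec]
  constructor
  · ext a c
    fin_cases a <;> fin_cases c <;>
      simp [Matrix.conjTranspose_apply, Matrix.smul_apply, smul_eq_mul, _root_.map_mul, map_add,
        hP', hs', mul_comm]
  · intro x
    have hx : star x ⬝ᵥ (P • !![1, (starRingEnd ℂ) F; F, F * (starRingEnd ℂ) F + s]) *ᵥ x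
        = P * ((x 0 + (starRingEnd ℂ) F * x 1) * (starRingEnd ℂ) (x 0 + (starRingEnd ℂ) F * x 1)
            + s * (x 1 * (starRingEnd ℂ) (x 1))) := by
      simp [dotProduct, Matrix.mulVec, Fin.sum_univ_two, Matrix.smul_apply,
        smul_eq_mul, map_add, _root_.map_mul, Complex.star_def]
      ring
    rw [hx, Complex.mul_conj, Complex.mul_conj]
    refine mul_nonneg hP (add_nonneg ?_ (mul_nonneg hs ?_)) <;>
      · rw [Complex.le_def]; simp [Complex.normSq_nonneg]

/-- If qubit POVMs {B_{·|i}}_{i=1}^n (finite outcome sets) satisfy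
Σ_i det(B_{b_i|i}/⟨0|B_{b_i|i}|0⟩) ≥ n - 1 for every outcome tuple, then they are jointly
measurable: there is a joint POVM G on the product outcome space whose i-th margin is B_{·|i}. -/
theorem stmt3 (n m : ℕ) (B : Fin n → Fin m → Matrix (Fin 2) (Fin 2) ℂ)
    (hpsd : ∀ i b, (B i b).PosSemidef)
    (hnorm : ∀ i, ∑ b, B i b = 1)
    (hp : ∀ i b, 0 < ((B i b) 0 0).re)
    (hcrit : ∀ g : Fin n → Fin m, ((n : ℝ) - 1) ≤ (∑ i, rdet (B i (g i))).re) :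
    ∃ G : (Fin n → Fin m) → Matrix (Fin 2) (Fin 2) ℂ,
      (∀ g, (G g).PosSemidef) ∧ (∑ g : Fin n → Fin m, G g = 1) ∧
      (∀ i b, B i b = ∑ g : Fin n → Fin m, if g i = b then G g else 0) := by
  classical
  have hherm : ∀ i b, (B i b).IsHermitian := fun i b => (hpsd i b).1
  have hpne : ∀ i b, (B i b) 0 0 ≠ 0 := by
    intro i b h
    have := hp i b
    rw [h] at this; simp at this
  -- column sums
  have hcol : ∀ (i : Fin n) (a c : Fin 2),
      ∑ b, (B i b) a c = (1 : Matrix (Fin 2) (Fin 2) ℂ) a c := by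
    intro i a c; rw [← Matrix.sum_apply a c Finset.univ (fun b => B i b), hnorm i]
  have hcol00 : ∀ i : Fin n, ∑ c, pC (B i c) = 1 := by
    intro i; simpa [Matrix.one_apply, pC] using hcol i 0 0
  have hcol10 : ∀ i : Fin n, ∑ c, pC (B i c) * fC (B i c) = 0 := by
    intro i
    have h := hcol i 1 0
    simp only [Matrix.one_apply, if_neg (by decide : ¬(1 : Fin 2) = 0)] at h
    rw [← h]
    exact Finset.sum_congr rfl fun c _ => (entry10 (hpne i c)).symm
  have hcol01 : ∀ i : Fin n, ∑ c, pC (B i c) * (starRingEnd ℂ) (fC (B i c)) = 0 := by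
    intro i
    have h := hcol i 0 1
    simp only [Matrix.one_apply, if_neg (by decide : ¬(0 : Fin 2) = 1)] at h
    rw [← h]
    exact Finset.sum_congr rfl fun c _ => (entry01 (hherm i c) (hpne i c)).symm
  have hcolt : ∀ i : Fin n, ∑ c, pC (B i c) * tC (B i c) = 0 := by
    intro i
    have h11 : ∑ c, (B i c) 1 1 = 1 := by
      simpa [Matrix.one_apply] using hcol i 1 1
    have : ∀ c : Fin m, pC (B i c) * tC (B i c) = (B i c) 1 1 - pC (B i c) := by
      intro c; rw [entry11 (hherm i c) (hpne i c)]; ring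
    rw [Finset.sum_congr rfl fun c _ => this c, Finset.sum_sub_distrib, h11, hcol00 i, sub_self]
  -- nonnegativity facts
  have hpnn : ∀ i b, 0 ≤ pC (B i b) := by
    intro i b
    rw [Complex.le_def]
    refine ⟨(hp i b).le, ?_⟩
    have := Complex.conj_eq_iff_im.1 ((hherm i b).apply 0 0)
    simp [pC, this]
  have hrim : ∀ i b, (rdet (B i b)).im = 0 := fun i b =>
    Complex.conj_eq_iff_im.1 (rdet_conj (hherm i b))
  have hPnn : ∀ g : Fin n → Fin m, 0 ≤ ∏ j, pC (B j (g j)) :=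
    fun g => Finset.prod_nonneg fun j _ => hpnn j (g j)
  have hsnn : ∀ g : Fin n → Fin m, 0 ≤ (∑ k, rdet (B k (g k))) + (1 - (n : ℂ)) := by
    intro g
    rw [Complex.le_def]
    constructor
    · have h := hcrit g
      simp only [Complex.add_re, Complex.sub_re, Complex.one_re, Complex.natCast_re,
        Complex.zero_re, Complex.re_sum]
      have : (∑ k, rdet (B k (g k))).re = ∑ k, (rdet (B k (g k))).re := Complex.re_sum _ _
      rw [← this]
      linarith
    · simp [Complex.add_im, Complex.sub_im, Complex.im_sum, hrim]
  -- the joint observable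
  set G : (Fin n → Fin m) → Matrix (Fin 2) (Fin 2) ℂ := fun g =>
    (∏ j, pC (B j (g j))) • !![1, (starRingEnd ℂ) (∑ k, fC (B k (g k)));
      ∑ k, fC (B k (g k)),
      (∑ k, fC (B k (g k))) * (starRingEnd ℂ) (∑ k, fC (B k (g k)))
        + ((∑ k, rdet (B k (g k))) + (1 - (n : ℂ)))] with hG
  -- margins
  have hmar : ∀ i b, B i b = ∑ g : Fin n → Fin m, if g i = b then G g else 0 := by
    intro i b
    ext a c
    rw [Matrix.sum_apply]
    have hite : ∀ g : Fin n → Fin m,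
        (if g i = b then G g else 0) a c = if g i = b then G g a c else 0 := by
      intro g; split <;> simp
    simp only [hite]
    simp only [hG, Matrix.smul_apply, smul_eq_mul]
    fin_cases a <;> fin_cases c
    · -- (0,0)
      simp only [Fin.mk_zero, Fin.mk_one, Matrix.cons_val', Matrix.cons_val_zero, Matrix.empty_val',
        Matrix.cons_val_fin_one, Matrix.of_apply, mul_one]
      exact (S00 (fun j c => pC (B j c)) hcol00 i b).symm
    · -- (0,1)
      simp only [Fin.mk_zero, Fin.mk_one, Matrix.cons_val', Matrix.cons_val_zero, Matrix.cons_val_one,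
        Matrix.head_cons, Matrix.empty_val', Matrix.cons_val_fin_one, Matrix.of_apply,
        Matrix.head_fin_const, map_sum]
      exact (entry01 (hherm i b) (hpne i b)).trans
        (S10 (fun j c => pC (B j c)) (fun j c => (starRingEnd ℂ) (fC (B j c)))
          hcol00 hcol01 i b).symm
    · -- (1,0)
      simp only [Fin.mk_zero, Fin.mk_one, Matrix.cons_val', Matrix.cons_val_zero, Matrix.cons_val_one,
        Matrix.head_cons, Matrix.empty_val', Matrix.cons_val_fin_one, Matrix.of_apply,
        Matrix.head_fin_const]
      exact (entry10 (hpne i b)).trans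
        (S10 (fun j c => pC (B j c)) (fun j c => fC (B j c)) hcol00 hcol10 i b).symm
    · -- (1,1)
      simp only [Fin.mk_zero, Fin.mk_one, Matrix.cons_val', Matrix.cons_val_one, Matrix.head_cons,
        Matrix.empty_val', Matrix.cons_val_fin_one, Matrix.of_apply, Matrix.head_fin_const]
      have hsplit : ∀ (X : Fin n → Fin n → ℂ),
          ∑ k, ∑ l, X k l = (∑ k, X k k) + ∑ k, ∑ l, if l = k then 0 else X k l := by
        intro X
        rw [← Finset.sum_add_distrib]
        refine Finset.sum_congr rfl fun k _ => ?_
        have h1 : ∑ l, X k l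
            = ∑ l, ((if l = k then X k l else 0) + (if l = k then 0 else X k l)) := by
          refine Finset.sum_congr rfl fun l _ => by split <;> simp
        rw [h1, Finset.sum_add_distrib, Finset.sum_ite_eq' Finset.univ k (fun l => X k l)]
        simp
      have hdecomp : ∀ g : Fin n → Fin m,
          (∑ k, fC (B k (g k))) * (starRingEnd ℂ) (∑ k, fC (B k (g k)))
            + ((∑ k, rdet (B k (g k))) + (1 - (n : ℂ)))
          = (∑ k, tC (B k (g k))) + 1
            + (∑ k, ∑ l, if l = k then 0
                else fC (B k (g k)) * (starRingEnd ℂ) (fC (B l (g l)))) := by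
        intro g
        rw [map_sum, Finset.sum_mul_sum,
          hsplit (fun k l => fC (B k (g k)) * (starRingEnd ℂ) (fC (B l (g l))))]
        simp only [tC, Finset.sum_sub_distrib, Finset.sum_add_distrib, Finset.sum_const,
          Finset.card_univ, Fintype.card_fin, nsmul_eq_mul, mul_one]
        ring
      have hsplitite : ∀ (g : Fin n → Fin m),
          (if g i = b then (∏ j, pC (B j (g j))) *
              ((∑ k, fC (B k (g k))) * (starRingEnd ℂ) (∑ k, fC (B k (g k)))
                + ((∑ k, rdet (B k (g k))) + (1 - (n : ℂ)))) else 0)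
          = (if g i = b then (∏ j, pC (B j (g j))) * (∑ k, tC (B k (g k))) else 0)
            + (if g i = b then (∏ j, pC (B j (g j))) else 0)
            + (if g i = b then (∏ j, pC (B j (g j))) *
                (∑ k, ∑ l, if l = k then 0
                  else fC (B k (g k)) * (starRingEnd ℂ) (fC (B l (g l)))) else 0) := by
        intro g
        rw [hdecomp g]
        split
        · ring
        · simp
      have hsum3 : (∑ g : Fin n → Fin m, if g i = b then (∏ j, pC (B j (g j))) *
              ((∑ k, fC (B k (g k))) * (starRingEnd ℂ) (∑ k, fC (B k (g k)))
                + ((∑ k, rdet (B k (g k))) + (1 - (n : ℂ)))) else 0)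
          = (∑ g : Fin n → Fin m,
                if g i = b then (∏ j, pC (B j (g j))) * (∑ k, tC (B k (g k))) else 0)
            + (∑ g : Fin n → Fin m, if g i = b then (∏ j, pC (B j (g j))) else 0)
            + (∑ g : Fin n → Fin m, if g i = b then (∏ j, pC (B j (g j))) *
                (∑ k, ∑ l, if l = k then 0
                  else fC (B k (g k)) * (starRingEnd ℂ) (fC (B l (g l)))) else 0) := by
        rw [← Finset.sum_add_distrib, ← Finset.sum_add_distrib]
        exact Finset.sum_congr rfl fun g _ => hsplitite g
      rw [hsum3, S10 (fun j c => pC (B j c)) (fun j c => tC (B j c)) hcol00 hcolt i b,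
        S00 (fun j c => pC (B j c)) hcol00 i b,
        S2 (fun j c => pC (B j c)) (fun j c => fC (B j c))
          (fun j c => (starRingEnd ℂ) (fC (B j c))) hcol00 hcol10 hcol01 i b,
        entry11 (hherm i b) (hpne i b)]
      ring
  -- sum to one
  have hsum : ∑ g : Fin n → Fin m, G g = 1 := by
    by_cases hn : n = 0
    · subst hn
      rw [Fintype.sum_unique]
      simp [hG, Matrix.one_fin_two]
    · have i0 : Fin n := ⟨0, Nat.pos_of_ne_zero hn⟩
      calc ∑ g : Fin n → Fin m, G g
          = ∑ g : Fin n → Fin m, ∑ b, (if g i0 = b then G g else 0) := by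
            refine Finset.sum_congr rfl fun g _ => ?_
            rw [Finset.sum_ite_eq Finset.univ (g i0) (fun _ => G g)]
            simp
        _ = ∑ b, ∑ g : Fin n → Fin m, (if g i0 = b then G g else 0) := Finset.sum_comm
        _ = ∑ b, B i0 b := Finset.sum_congr rfl fun b _ => (hmar i0 b).symm
        _ = 1 := hnorm i0
  refine ⟨G, fun g => ?_, hsum, hmar⟩
  rw [hG]
  exact psd_aux _ _ _ (hPnn g) (hsnn g)
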